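/- Let θ ∈ (0,1) and 0 < ν < 1. There exists a constant C = C(ν, θ) such that for all u, v ∈ ℝ³ with |u| ≤ ν and |v| ≤ ν, every σ > 0, and each component index l ∈ {1,2,3}, the function φ(s) := ∫_{A(σ, s^{−θ})} (Σ_v(k))_l · cos(k·u s − |k| s) dk is differentiable at every s ≥ 1 with σ < s^{−θ}, and satisfies |φ'(s)| ≤ C s^{−(1+θ)} there. -/

import Mathlib

open MeasureTheory
open scoped RealInnerProductSpace Topology

noncomputable section

/-- ℝ³ as a Euclidean space. -/
abbrev E3 := EuclideanSpace ℝ (Fin 3)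

/-- The closed annulus `{k : a ≤ |k| ≤ b}` in ℝ³. -/
def annulus (a b : ℝ) : Set E3 := {k | a ≤ ‖k‖ ∧ ‖k‖ ≤ b}

/-- The soft-photon velocity field
`Σ_v(k) = (2 / (|k|² (1 − (k/|k|)·v))) • (v − ((k·v)/|k|²) k)`. -/
def Sig (v k : E3) : E3 :=
  (2 / (‖k‖ ^ 2 * (1 - ⟪k, v⟫ / ‖k‖))) • (v - (⟪k, v⟫ / ‖k‖ ^ 2) • k)

open scoped ENNReal

lemma Sig_zero (v : E3) : Sig v 0 = 0 := by simp [Sig]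

lemma coord_abs_le_norm (w : E3) (l : Fin 3) : |w l| ≤ ‖w‖ := by
  have h := abs_real_inner_le_norm (EuclideanSpace.single l (1:ℝ)) w
  simpa [EuclideanSpace.inner_single_left] using h

lemma Sig_smul (v x : E3) {r : ℝ} (hr : 0 < r) : Sig v (r • x) = (r^2)⁻¹ • Sig v x := by
  rcases eq_or_ne x 0 with rfl | hx
  · simp [Sig_zero]
  · have hxn : ‖x‖ ≠ 0 := norm_ne_zero_iff.2 hx
    have hn : ‖r • x‖ = r * ‖x‖ := by
      rw [norm_smul, Real.norm_eq_abs, abs_of_pos hr]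
    have hi : ⟪r • x, v⟫ = r * ⟪x, v⟫ := real_inner_smul_left x v r
    have hden : (r*‖x‖)^2 * (1 - r*⟪x,v⟫/(r*‖x‖)) = r^2 * (‖x‖^2*(1-⟪x,v⟫/‖x‖)) := by
      field_simp
    rw [Sig, Sig, hn, hi, smul_smul, smul_smul, hden]
    congr 1
    · rw [div_eq_mul_inv, div_eq_mul_inv, mul_inv]; ring
    · congr 2
      field_simp

lemma Sig_bound {ν : ℝ} (hν1 : ν < 1) (v : E3) (hv : ‖v‖ ≤ ν) (x : E3) (l : Fin 3) :
    |Sig v x l| ≤ (4/(1-ν)) * (‖x‖^2)⁻¹ := by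
  have hν0 : 0 ≤ ν := le_trans (norm_nonneg v) hv
  rcases eq_or_ne x 0 with rfl | hx
  · simp [Sig_zero]
  · have hxn : 0 < ‖x‖ := norm_pos_iff.2 hx
    have hinner : |⟪x,v⟫| ≤ ‖x‖ * ν := by
      calc |⟪x,v⟫| ≤ ‖x‖ * ‖v‖ := abs_real_inner_le_norm x v
      _ ≤ ‖x‖ * ν := by gcongr
    have hden : 1 - ν ≤ 1 - ⟪x,v⟫/‖x‖ := by
      have : ⟪x,v⟫/‖x‖ ≤ ν := by
        rw [div_le_iff₀ hxn]
        calc ⟪x,v⟫ ≤ |⟪x,v⟫| := le_abs_self _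
        _ ≤ ‖x‖ * ν := hinner
        _ = ν * ‖x‖ := by ring
      linarith
    have hdenpos : 0 < 1 - ⟪x,v⟫/‖x‖ := lt_of_lt_of_le (by linarith) hden
    have hvec : ‖v - (⟪x,v⟫/‖x‖^2) • x‖ ≤ 2 := by
      calc ‖v - (⟪x,v⟫/‖x‖^2) • x‖ ≤ ‖v‖ + ‖(⟪x,v⟫/‖x‖^2) • x‖ := norm_sub_le _ _
      _ = ‖v‖ + |⟪x,v⟫|/‖x‖^2 * ‖x‖ := by
          rw [norm_smul, Real.norm_eq_abs, abs_div, abs_of_nonneg (by positivity : (0:ℝ) ≤ ‖x‖^2)]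
      _ ≤ ν + (‖x‖*ν)/‖x‖^2 * ‖x‖ := by gcongr
      _ = ν + ν := by field_simp
      _ ≤ 2 := by linarith
    calc |Sig v x l| ≤ ‖Sig v x‖ := coord_abs_le_norm _ _
    _ = |2 / (‖x‖ ^ 2 * (1 - ⟪x, v⟫ / ‖x‖))| * ‖v - (⟪x,v⟫/‖x‖^2) • x‖ := by
        rw [Sig, norm_smul, Real.norm_eq_abs]
    _ ≤ (2 / (‖x‖ ^ 2 * (1 - ν))) * 2 := by
        have h1 : 0 < ‖x‖^2 * (1-ν) := mul_pos (by positivity) (by linarith)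
        have h2 : ‖x‖^2 * (1-ν) ≤ ‖x‖^2*(1-⟪x,v⟫/‖x‖) :=
          mul_le_mul_of_nonneg_left hden (by positivity)
        rw [abs_of_nonneg (div_nonneg (by norm_num) (le_of_lt (lt_of_lt_of_le h1 h2)))]
        exact mul_le_mul (div_le_div_of_nonneg_left (by norm_num) h1 h2) hvec
          (norm_nonneg _) (le_of_lt (div_pos (by norm_num) h1))
    _ = (4/(1-ν)) * (‖x‖^2)⁻¹ := by
        rw [div_eq_mul_inv, div_eq_mul_inv, mul_inv]
        ring

lemma Sig_measurable (v : E3) (l : Fin 3) : Measurable (fun x : E3 => Sig v x l) := by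
  have : (fun x : E3 => Sig v x l)
      = fun x => (2 / (‖x‖ ^ 2 * (1 - ⟪x, v⟫ / ‖x‖))) * (v l - (⟪x, v⟫ / ‖x‖ ^ 2) * x l) := by
    funext x
    simp [Sig]
  rw [this]
  have hn : Measurable (fun x : E3 => ‖x‖) := continuous_norm.measurable
  have hi : Measurable (fun x : E3 => ⟪x, v⟫) :=
    (continuous_id.inner continuous_const).measurable
  have hl : Measurable (fun x : E3 => x l) := ((continuous_apply l).comp (PiLp.continuous_ofLp 2 _)).measurable
  fun_prop

lemma cover_dyadic {R : ℝ} (hR : 0 < R) :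
    Metric.closedBall (0:E3) R \ {0} ⊆
      ⋃ n : ℕ, {x : E3 | R/2^(n+1) ≤ ‖x‖ ∧ ‖x‖ ≤ R/2^n} := by
  intro x hx
  obtain ⟨hxR, hx0⟩ := hx
  rw [Metric.mem_closedBall, dist_zero_right] at hxR
  have hxn : 0 < ‖x‖ := norm_pos_iff.2 (by simpa using hx0)
  have hex : ∃ n : ℕ, R / 2^(n+1) ≤ ‖x‖ := by
    obtain ⟨n, hn⟩ := pow_unbounded_of_one_lt (R / ‖x‖) (by norm_num : (1:ℝ) < 2)
    refine ⟨n, ?_⟩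
    rw [div_le_iff₀ (by positivity)]
    rw [div_lt_iff₀ hxn] at hn
    have h2 : (2:ℝ)^(n+1) = 2*2^n := by ring
    nlinarith [pow_pos (by norm_num : (0:ℝ) < 2) n, hxn]
  classical
  set N := Nat.find hex with hNdef
  have hlow : R / 2^(N+1) ≤ ‖x‖ := Nat.find_spec hex
  have hhigh : ‖x‖ ≤ R / 2^N := by
    rcases Nat.eq_zero_or_pos N with h0 | hpos
    · rw [h0]; simpa using hxR
    · have := Nat.find_min hex (Nat.sub_lt hpos one_pos)
      have h2 : N - 1 + 1 = N := Nat.succ_pred_eq_of_pos hpos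
      rw [h2] at this
      push_neg at this
      linarith
  exact Set.mem_iUnion.2 ⟨N, hlow, hhigh⟩

lemma integrableOn_inv_norm_sq {R : ℝ} (hR : 0 < R) :
    IntegrableOn (fun x : E3 => (‖x‖^2)⁻¹) (Metric.closedBall 0 R) volume := by
  have hmeas : Measurable (fun x : E3 => (‖x‖^2)⁻¹) := by fun_prop
  constructor
  · exact hmeas.aestronglyMeasurable
  · rw [hasFiniteIntegral_iff_ofReal (Filter.Eventually.of_forall (fun x => by positivity))]
    set A : ℕ → Set E3 := fun n => {x : E3 | R/2^(n+1) ≤ ‖x‖ ∧ ‖x‖ ≤ R/2^n} with hA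
    have hAmeas : ∀ n, MeasurableSet (A n) := by
      intro n
      exact (isClosed_le continuous_const continuous_norm).measurableSet.inter
        (isClosed_le continuous_norm continuous_const).measurableSet
    have key : ∀ n, ∫⁻ x in A n, ENNReal.ofReal ((‖x‖^2)⁻¹) ≤
        ENNReal.ofReal (4*R*(1/2)^n) * volume (Metric.ball (0:E3) 1) := by
      intro n
      have hb : ∀ x ∈ A n, ENNReal.ofReal ((‖x‖^2)⁻¹) ≤
          ENNReal.ofReal (((R/2^(n+1))^2)⁻¹) := by
        intro x hx
        apply ENNReal.ofReal_le_ofReal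
        have h1 : 0 < R/2^(n+1) := by positivity
        have := hx.1
        gcongr
      calc ∫⁻ x in A n, ENNReal.ofReal ((‖x‖^2)⁻¹)
          ≤ ∫⁻ _x in A n, ENNReal.ofReal (((R/2^(n+1))^2)⁻¹) :=
            setLIntegral_mono' (hAmeas n) hb
        _ = ENNReal.ofReal (((R/2^(n+1))^2)⁻¹) * volume (A n) := setLIntegral_const _ _
        _ ≤ ENNReal.ofReal (((R/2^(n+1))^2)⁻¹) *
              (ENNReal.ofReal ((R/2^n)^3) * volume (Metric.ball (0:E3) 1)) := by
            gcongr
            have hsub : A n ⊆ Metric.closedBall (0:E3) (R/2^n) := by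
              intro x hx
              rw [Metric.mem_closedBall, dist_zero_right]
              exact hx.2
            calc volume (A n) ≤ volume (Metric.closedBall (0:E3) (R/2^n)) :=
                  measure_mono hsub
              _ = ENNReal.ofReal ((R/2^n)^3) * volume (Metric.ball (0:E3) 1) := by
                  rw [Measure.addHaar_closedBall _ _ (by positivity)]
                  congr
                  simp [finrank_euclideanSpace]
        _ = ENNReal.ofReal (4*R*(1/2)^n) * volume (Metric.ball (0:E3) 1) := by
            rw [← mul_assoc, ← ENNReal.ofReal_mul (by positivity)]
            congr 2
            rw [one_div_pow]
            field_simp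
            ring
    calc ∫⁻ x in Metric.closedBall (0:E3) R, ENNReal.ofReal ((‖x‖^2)⁻¹)
        ≤ ∫⁻ x in (Metric.closedBall (0:E3) R \ {0}) ∪ {0}, ENNReal.ofReal ((‖x‖^2)⁻¹) := by
          apply lintegral_mono_set
          intro x hx
          by_cases h : x = (0:E3)
          · exact Or.inr (by simp [h])
          · exact Or.inl ⟨hx, by simp [h]⟩
      _ ≤ (∫⁻ x in Metric.closedBall (0:E3) R \ {0}, ENNReal.ofReal ((‖x‖^2)⁻¹))
            + ∫⁻ x in ({0} : Set E3), ENNReal.ofReal ((‖x‖^2)⁻¹) := lintegral_union_le _ _ _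
      _ ≤ (∫⁻ x in ⋃ n, A n, ENNReal.ofReal ((‖x‖^2)⁻¹)) + 0 := by
          gcongr
          · exact cover_dyadic hR
          · rw [setLIntegral_measure_zero _ _ (measure_singleton 0)]
      _ ≤ (∑' n, ∫⁻ x in A n, ENNReal.ofReal ((‖x‖^2)⁻¹)) + 0 := by
          gcongr
          exact lintegral_iUnion_le _ _
      _ ≤ (∑' n, ENNReal.ofReal (4*R*(1/2)^n) * volume (Metric.ball (0:E3) 1)) + 0 := by
          gcongr
          exact key _
      _ < ∞ := by
          rw [add_zero, ENNReal.tsum_mul_right]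
          apply ENNReal.mul_lt_top _ measure_ball_lt_top
          have hsum : Summable (fun n : ℕ => 4*R*(1/2:ℝ)^n) :=
            (summable_geometric_of_lt_one (by norm_num) (by norm_num)).mul_left _
          rw [← ENNReal.ofReal_tsum_of_nonneg (fun n => by positivity) hsum]
          exact ENNReal.ofReal_lt_top

lemma integrableOn_inv_norm :
    IntegrableOn (fun x : E3 => (‖x‖)⁻¹) (Metric.closedBall 0 1) volume := by
  apply Integrable.mono (integrableOn_inv_norm_sq one_pos)
    (by fun_prop : Measurable (fun x : E3 => (‖x‖)⁻¹)).aestronglyMeasurable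
  filter_upwards [ae_restrict_mem Metric.isClosed_closedBall.measurableSet] with x hx
  rw [Metric.mem_closedBall, dist_zero_right] at hx
  rcases eq_or_ne x 0 with rfl | hx0
  · simp
  · have hxn : 0 < ‖x‖ := norm_pos_iff.2 hx0
    rw [Real.norm_eq_abs, Real.norm_eq_abs, abs_of_nonneg (by positivity),
      abs_of_nonneg (by positivity)]
    have h2 : 0 < ‖x‖^2 := by positivity
    have h3 : ‖x‖^2 ≤ ‖x‖ := by nlinarith
    exact inv_anti₀ h2 h3

lemma annulus_measurableSet (a b : ℝ) : MeasurableSet (annulus a b) :=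
  ((isClosed_le continuous_const continuous_norm).inter
    (isClosed_le continuous_norm continuous_const)).measurableSet

lemma annulus_integral_inv_sq {a b : ℝ} (ha : 0 < a) (hab : a ≤ b) :
    ∫ x in annulus a b, (‖x‖^2)⁻¹ =
      (3 * (volume (Metric.ball (0:E3) 1)).toReal) * (b - a) := by
  rw [← integral_indicator (annulus_measurableSet a b)]
  have h1 : (annulus a b).indicator (fun x : E3 => (‖x‖^2)⁻¹)
      = fun x : E3 => (Set.indicator (Set.Icc a b) (fun r : ℝ => (r^2)⁻¹)) ‖x‖ := by
    funext x
    by_cases h : x ∈ annulus a b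
    · rw [Set.indicator_of_mem h, Set.indicator_of_mem (Set.mem_Icc.2 ⟨h.1, h.2⟩)]
    · rw [Set.indicator_of_notMem h, Set.indicator_of_notMem (by
        intro hc
        exact h ⟨(Set.mem_Icc.1 hc).1, (Set.mem_Icc.1 hc).2⟩)]
  rw [h1, integral_fun_norm_addHaar volume (Set.indicator (Set.Icc a b) (fun r : ℝ => (r^2)⁻¹))]
  have h2 : (fun y : ℝ => y ^ (Module.finrank ℝ E3 - 1) •
        (Set.indicator (Set.Icc a b) (fun r : ℝ => (r^2)⁻¹)) y)
      = Set.indicator (Set.Icc a b) (fun y : ℝ => y^2 * (y^2)⁻¹) := by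
    funext y
    simp only [finrank_euclideanSpace, Fintype.card_fin]
    by_cases h : y ∈ Set.Icc a b
    · rw [Set.indicator_of_mem h, Set.indicator_of_mem h, smul_eq_mul]
    · rw [Set.indicator_of_notMem h, Set.indicator_of_notMem h, smul_zero]
  have hint : Set.Icc a b ∩ Set.Ioi (0:ℝ) = Set.Icc a b :=
    Set.inter_eq_self_of_subset_left (fun y hy => lt_of_lt_of_le ha hy.1)
  rw [h2, integral_indicator measurableSet_Icc, Measure.restrict_restrict measurableSet_Icc,
    hint,
    setIntegral_congr_fun measurableSet_Icc
      (fun y hy => mul_inv_cancel₀ (pow_ne_zero 2 (ne_of_gt (lt_of_lt_of_le ha hy.1))))]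
  simp only [integral_const, Measure.restrict_apply MeasurableSet.univ, Set.univ_inter,
    measureReal_restrict_apply_univ, measureReal_def, Real.volume_Icc, smul_eq_mul, mul_one, finrank_euclideanSpace, Fintype.card_fin,
    nsmul_eq_mul, Nat.cast_ofNat, ENNReal.toReal_ofReal (by linarith : (0:ℝ) ≤ b - a)]
  ring

lemma scaling_ball (u v : E3) (l : Fin 3) {r : ℝ} (hr : 0 < r) (t : ℝ) :
    ∫ k in Metric.closedBall (0:E3) r, Sig v k l * Real.cos ((⟪k,u⟫ - ‖k‖) * t)
    = r * ∫ x in Metric.closedBall (0:E3) 1,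
        Sig v x l * Real.cos ((⟪x,u⟫ - ‖x‖) * (r*t)) := by
  set g : E3 → ℝ := fun k => Sig v k l * Real.cos ((⟪k,u⟫ - ‖k‖) * t) with hg
  have key := Measure.integral_comp_smul (volume : Measure E3)
    ((Metric.closedBall (0:E3) r).indicator g) r
  have hfun : (fun x : E3 => (Metric.closedBall (0:E3) r).indicator g (r • x))
      = (Metric.closedBall (0:E3) 1).indicator
          (fun x : E3 => (r^2)⁻¹ * (Sig v x l * Real.cos ((⟪x,u⟫ - ‖x‖) * (r*t)))) := by
    funext x
    have hmem : r • x ∈ Metric.closedBall (0:E3) r ↔ x ∈ Metric.closedBall (0:E3) 1 := by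
      rw [Metric.mem_closedBall, Metric.mem_closedBall, dist_zero_right, dist_zero_right,
        norm_smul, Real.norm_eq_abs, abs_of_pos hr]
      constructor
      · intro h; nlinarith
      · intro h; nlinarith
    by_cases hx : x ∈ Metric.closedBall (0:E3) 1
    · rw [Set.indicator_of_mem (hmem.2 hx), Set.indicator_of_mem hx, hg]
      simp only
      rw [Sig_smul v x hr, real_inner_smul_left, norm_smul, Real.norm_eq_abs, abs_of_pos hr]
      rw [PiLp.smul_apply, smul_eq_mul]
      rw [show (r*⟪x,u⟫ - r*‖x‖)*t = (⟪x,u⟫-‖x‖)*(r*t) by ring]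
      ring
    · rw [Set.indicator_of_notMem (fun hc => hx (hmem.1 hc)), Set.indicator_of_notMem hx]
  rw [hfun] at key
  rw [integral_indicator (Metric.isClosed_closedBall.measurableSet),
    integral_indicator (Metric.isClosed_closedBall.measurableSet), integral_const_mul] at key
  have hfr : Module.finrank ℝ E3 = 3 := by simp [finrank_euclideanSpace]
  rw [hfr, smul_eq_mul, abs_of_pos (by positivity : (0:ℝ) < ((r^3)⁻¹))] at key
  have hr3 : (r:ℝ)^3 ≠ 0 := by positivity
  set I1 := ∫ x in Metric.closedBall (0:E3) 1,
      Sig v x l * Real.cos ((⟪x,u⟫ - ‖x‖) * (r*t)) with hI1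
  set Ir := ∫ k in Metric.closedBall (0:E3) r, g k with hIr
  have h5 : Ir = r^3 * ((r^2)⁻¹ * I1) := by
    rw [key, ← mul_assoc, mul_inv_cancel₀ hr3, one_mul]
  rw [h5]
  have h6 : (r:ℝ)^3 * (r^2)⁻¹ = r := by
    field_simp
  calc r^3 * ((r^2)⁻¹ * I1) = (r^3 * (r^2)⁻¹) * I1 := by ring
  _ = r * I1 := by rw [h6]

/-- Estimate (A.12): the derivative in `s` of the infrared-tail integrand, with moving
upper cutoff `s^{-θ}`, is of order `s^{-(1+θ)}`. -/
theorem statement4 (θ ν : ℝ) (hθ0 : 0 < θ) (hθ1 : θ < 1) (hν0 : 0 < ν) (hν1 : ν < 1) :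
    ∃ C : ℝ, ∀ u v : E3, ‖u‖ ≤ ν → ‖v‖ ≤ ν → ∀ σ : ℝ, 0 < σ → ∀ l : Fin 3,
      ∀ s : ℝ, 1 ≤ s → σ < s ^ (-θ) →
      ∃ d : ℝ,
        HasDerivAt (fun s' : ℝ => ∫ k in annulus σ (s' ^ (-θ)),
            (Sig v k) l * Real.cos (⟪k, u⟫ * s' - ‖k‖ * s')) d s ∧
        |d| ≤ C * s ^ (-(1 + θ)) := by
  set M : ℝ := 4/(1-ν) with hMdef
  have hM : 0 < M := by
    apply div_pos (by norm_num)
    linarith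
  set κ : ℝ := 3 * (volume (Metric.ball (0:E3) 1)).toReal with hκdef
  have hκ : 0 ≤ κ := by positivity
  set C₁ : ℝ := ∫ x in Metric.closedBall (0:E3) 1, (‖x‖^2)⁻¹ with hC₁def
  have hC₁ : 0 ≤ C₁ := integral_nonneg (fun x => by positivity)
  set C₃ : ℝ := ∫ x in Metric.closedBall (0:E3) 1, (‖x‖)⁻¹ with hC₃def
  have hC₃ : 0 ≤ C₃ := integral_nonneg (fun x => by positivity)
  set K : ℝ := M*κ + M*C₁ with hKdef
  have hK : 0 ≤ K := by positivity
  set K₂ : ℝ := 2*M*C₃ with hK₂def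
  have hK₂ : 0 ≤ K₂ := by positivity
  refine ⟨M*C₁ + 2*K + (K₂ + K), ?_⟩
  intro u v hu hv σ hσ l s hs hσs
  have hs0 : 0 < s := lt_of_lt_of_le one_pos hs
  -- basic pointwise bounds
  have hfb : ∀ x : E3, |Sig v x l| ≤ M * (‖x‖^2)⁻¹ := fun x => Sig_bound hν1 v hv x l
  have hcb : ∀ x : E3, |⟪x,u⟫ - ‖x‖| ≤ 2 * ‖x‖ := by
    intro x
    have h1 : |⟪x,u⟫| ≤ ‖x‖ * ν := by
      calc |⟪x,u⟫| ≤ ‖x‖ * ‖u‖ := abs_real_inner_le_norm x u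
      _ ≤ ‖x‖ * ν := by gcongr
    have h2 := abs_sub (⟪x,u⟫) (‖x‖)
    have h3 : |‖x‖| = ‖x‖ := abs_of_nonneg (norm_nonneg x)
    have hν1' : ν ≤ 1 := le_of_lt hν1
    nlinarith [norm_nonneg x, abs_sub_abs_le_abs_sub (⟪x,u⟫) (‖x‖),
      abs_sub (⟪x,u⟫) (‖x‖)]
  have hfm : Measurable (fun x : E3 => Sig v x l) := Sig_measurable v l
  have hcm : Continuous (fun x : E3 => ⟪x,u⟫ - ‖x‖) :=
    (continuous_id.inner continuous_const).sub continuous_norm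
  -- integrand bound
  have hgb : ∀ (t : ℝ) (x : E3),
      |Sig v x l * Real.cos ((⟪x,u⟫ - ‖x‖) * t)| ≤ M * (‖x‖^2)⁻¹ := by
    intro t x
    rw [abs_mul]
    calc |Sig v x l| * |Real.cos ((⟪x,u⟫ - ‖x‖) * t)| ≤ (M * (‖x‖^2)⁻¹) * 1 :=
      mul_le_mul (hfb x) (Real.abs_cos_le_one _) (abs_nonneg _) (by positivity)
    _ = M * (‖x‖^2)⁻¹ := mul_one _
  have hgmeas : ∀ t : ℝ, Measurable (fun x : E3 => Sig v x l * Real.cos ((⟪x,u⟫ - ‖x‖) * t)) :=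
    fun t => hfm.mul ((Real.continuous_cos.comp (hcm.mul continuous_const)).measurable)
  have hIntOn : ∀ (R : ℝ), 0 < R → ∀ t : ℝ,
      IntegrableOn (fun x : E3 => Sig v x l * Real.cos ((⟪x,u⟫ - ‖x‖) * t))
        (Metric.closedBall 0 R) volume := by
    intro R hR t
    apply Integrable.mono ((integrableOn_inv_norm_sq hR).const_mul M)
      (hgmeas t).aestronglyMeasurable
    apply Filter.Eventually.of_forall
    intro x
    rw [Real.norm_eq_abs, Real.norm_eq_abs]
    exact le_trans (hgb t x) (le_abs_self _)
  -- the rescaled integral J and its derivative J'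
  set J : ℝ → ℝ := fun t => ∫ x in Metric.closedBall (0:E3) 1,
      Sig v x l * Real.cos ((⟪x,u⟫ - ‖x‖) * t) with hJdef
  set J' : ℝ → ℝ := fun t => ∫ x in Metric.closedBall (0:E3) 1,
      Sig v x l * (-Real.sin ((⟪x,u⟫ - ‖x‖) * t) * (⟪x,u⟫ - ‖x‖)) with hJ'def
  have hJapp : ∀ t : ℝ, (∫ x in Metric.closedBall (0:E3) 1,
      Sig v x l * Real.cos ((⟪x,u⟫ - ‖x‖) * t)) = J t := fun t => rfl
  have hF'b : ∀ (t : ℝ) (x : E3),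
      |Sig v x l * (-Real.sin ((⟪x,u⟫ - ‖x‖) * t) * (⟪x,u⟫ - ‖x‖))| ≤ 2*M*(‖x‖)⁻¹ := by
    intro t x
    rcases eq_or_ne x 0 with rfl | hx0
    · simp [Sig_zero]
    · have hxn : 0 < ‖x‖ := norm_pos_iff.2 hx0
      rw [abs_mul, abs_mul, abs_neg]
      calc |Sig v x l| * (|Real.sin ((⟪x,u⟫ - ‖x‖) * t)| * |⟪x,u⟫ - ‖x‖|)
          ≤ (M * (‖x‖^2)⁻¹) * (1 * (2*‖x‖)) := by
            apply mul_le_mul (hfb x) _ (by positivity) (by positivity)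
            exact mul_le_mul (Real.abs_sin_le_one _) (hcb x) (abs_nonneg _) zero_le_one
        _ = 2*M*(‖x‖)⁻¹ := by field_simp
  have hF'meas : ∀ t : ℝ, Measurable (fun x : E3 =>
      Sig v x l * (-Real.sin ((⟪x,u⟫ - ‖x‖) * t) * (⟪x,u⟫ - ‖x‖))) := fun t =>
    hfm.mul (((Real.continuous_sin.comp (hcm.mul continuous_const)).neg.mul hcm).measurable)
  have hJderiv : ∀ t : ℝ, HasDerivAt J (J' t) t := by
    intro t
    have h := hasDerivAt_integral_of_dominated_loc_of_deriv_le
      (μ := volume.restrict (Metric.closedBall (0:E3) 1)) (x₀ := t)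
      (F := fun t' x => Sig v x l * Real.cos ((⟪x,u⟫ - ‖x‖) * t'))
      (F' := fun t' x => Sig v x l * (-Real.sin ((⟪x,u⟫ - ‖x‖) * t') * (⟪x,u⟫ - ‖x‖)))
      (bound := fun x => 2*M*(‖x‖)⁻¹)
      (Metric.ball_mem_nhds t one_pos)
      (Filter.Eventually.of_forall (fun t' => (hgmeas t').aestronglyMeasurable))
      (hIntOn 1 one_pos t)
      ((hF'meas t).aestronglyMeasurable)
      (Filter.Eventually.of_forall (fun x => fun t' _ => le_trans (hF'b t' x) (le_refl _)))
      ((integrableOn_inv_norm).const_mul (2*M))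
      (Filter.Eventually.of_forall (fun x => fun t' _ => ?_))
    · exact h.2
    · have hc : HasDerivAt (fun z : ℝ => (⟪x,u⟫ - ‖x‖) * z) (⟪x,u⟫ - ‖x‖) t' := by
        simpa using (hasDerivAt_id t').const_mul (⟪x,u⟫ - ‖x‖)
      have hcos := (Real.hasDerivAt_cos ((⟪x,u⟫ - ‖x‖) * t')).comp t' hc
      have := hcos.const_mul (Sig v x l)
      simpa [Function.comp] using this
  -- uniform bounds on J and J'
  have hJbound : ∀ t : ℝ, |J t| ≤ M * C₁ := by
    intro t
    rw [← Real.norm_eq_abs, hJdef]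
    calc ‖∫ x in Metric.closedBall (0:E3) 1, Sig v x l * Real.cos ((⟪x,u⟫ - ‖x‖) * t)‖
        ≤ ∫ x in Metric.closedBall (0:E3) 1, M * (‖x‖^2)⁻¹ := by
          apply norm_integral_le_of_norm_le ((integrableOn_inv_norm_sq one_pos).const_mul M)
          exact Filter.Eventually.of_forall (fun x => by
            rw [Real.norm_eq_abs]; exact hgb t x)
      _ = M * C₁ := by rw [integral_const_mul]
  have hJ'bound : ∀ t : ℝ, |J' t| ≤ K₂ := by
    intro t
    rw [← Real.norm_eq_abs, hJ'def]
    calc ‖∫ x in Metric.closedBall (0:E3) 1,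
          Sig v x l * (-Real.sin ((⟪x,u⟫ - ‖x‖) * t) * (⟪x,u⟫ - ‖x‖))‖
        ≤ ∫ x in Metric.closedBall (0:E3) 1, 2*M*(‖x‖)⁻¹ := by
          apply norm_integral_le_of_norm_le ((integrableOn_inv_norm).const_mul (2*M))
          exact Filter.Eventually.of_forall (fun x => by
            rw [Real.norm_eq_abs]; exact hF'b t x)
      _ = K₂ := by rw [integral_const_mul]
  -- Lipschitz estimate for r ↦ r * J r
  have hscale : ∀ r : ℝ, 0 < r → ∀ t : ℝ,
      (∫ k in Metric.closedBall (0:E3) r, Sig v k l * Real.cos ((⟪k,u⟫ - ‖k‖) * t))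
        = r * J (r*t) := by
    intro r hr t
    rw [scaling_ball u v l hr t, hJdef]
  have hLip : ∀ a b : ℝ, 0 < a → a ≤ b → |b * J b - a * J a| ≤ M*κ*(b-a) := by
    intro a b ha hab
    have hb : 0 < b := lt_of_lt_of_le ha hab
    have e1 := hscale b hb 1
    have e2 := hscale a ha 1
    rw [mul_one] at e1 e2
    rw [← e1, ← e2]
    have hsub : Metric.closedBall (0:E3) a ⊆ Metric.closedBall (0:E3) b :=
      Metric.closedBall_subset_closedBall hab
    rw [← integral_diff Metric.isClosed_closedBall.measurableSet (hIntOn b hb 1) hsub]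
    have hdiffsub : Metric.closedBall (0:E3) b \ Metric.closedBall (0:E3) a ⊆ annulus a b := by
      intro x hx
      obtain ⟨hx1, hx2⟩ := hx
      rw [Metric.mem_closedBall, dist_zero_right] at hx1
      constructor
      · by_contra hcon
        push_neg at hcon
        exact hx2 (by rw [Metric.mem_closedBall, dist_zero_right]; linarith)
      · exact hx1
    calc |∫ x in Metric.closedBall (0:E3) b \ Metric.closedBall (0:E3) a,
          Sig v x l * Real.cos ((⟪x,u⟫ - ‖x‖) * 1)|
        ≤ ∫ x in Metric.closedBall (0:E3) b \ Metric.closedBall (0:E3) a, M * (‖x‖^2)⁻¹ := by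
          rw [← Real.norm_eq_abs]
          apply norm_integral_le_of_norm_le
            (IntegrableOn.mono_set ((integrableOn_inv_norm_sq hb).const_mul M) Set.diff_subset)
          exact Filter.Eventually.of_forall (fun x => by
            rw [Real.norm_eq_abs]; exact hgb 1 x)
      _ ≤ ∫ x in annulus a b, M * (‖x‖^2)⁻¹ := by
          apply setIntegral_mono_set
          · exact IntegrableOn.mono_set ((integrableOn_inv_norm_sq hb).const_mul M)
              (fun x hx => by
                rw [Metric.mem_closedBall, dist_zero_right]; exact hx.2)
          · exact Filter.Eventually.of_forall (fun x => by positivity)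
          · exact Filter.Eventually.of_forall hdiffsub
      _ = M*κ*(b-a) := by
          rw [integral_const_mul, annulus_integral_inv_sq ha hab, hκdef]
          ring
  -- derivative bound for r ↦ r * J r via slopes
  have hhb : ∀ r : ℝ, 0 < r → |J r + r * J' r| ≤ M*κ := by
    intro r hr
    have hQd : HasDerivAt (fun p : ℝ => p * J p) (J r + r * J' r) r := by
      simpa using (hasDerivAt_id r).fun_mul (hJderiv r)
    rw [hasDerivAt_iff_tendsto_slope] at hQd
    have hmono : 𝓝[>] r ≤ 𝓝[≠] r :=
      nhdsWithin_mono r (fun z hz => ne_of_gt hz)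
    have hQd' := (hQd.mono_left hmono).abs
    apply le_of_tendsto hQd'
    filter_upwards [self_mem_nhdsWithin] with z hz
    have hzr : r < z := hz
    have hpos : (0:ℝ) < z - r := by linarith
    have hslope : slope (fun p : ℝ => p * J p) r z = (z * J z - r * J r)/(z - r) := by
      rw [slope_def_field]
    rw [hslope, abs_div, abs_of_pos hpos, div_le_iff₀ hpos]
    exact hLip r z hr (le_of_lt hzr)
  -- decay of J' for large argument
  have hJ'decay : ∀ τ : ℝ, 0 < τ → |J' τ| ≤ K/τ := by
    intro τ hτ
    rw [le_div_iff₀ hτ]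
    have h2 : τ * J' τ = (J τ + τ * J' τ) + (-(J τ)) := by ring
    calc |J' τ| * τ = |τ * J' τ| := by
          rw [abs_mul, abs_of_pos hτ]; ring
    _ = |(J τ + τ * J' τ) + (-(J τ))| := by rw [← h2]
    _ ≤ |J τ + τ * J' τ| + |(-(J τ))| := abs_add_le _ _
    _ = |J τ + τ * J' τ| + |J τ| := by rw [abs_neg]
    _ ≤ M*κ + M*C₁ := add_le_add (hhb τ hτ) (hJbound τ)
    _ = K := hKdef.symm
  -- derivative of the reparametrized function
  have hsne : s ≠ 0 := ne_of_gt hs0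
  have hbpos : 0 < s ^ (-θ:ℝ) := Real.rpow_pos_of_pos hs0 _
  have hb' : HasDerivAt (fun z : ℝ => z ^ (-θ)) (-θ * s ^ (-θ-1)) s := by
    simpa using Real.hasDerivAt_rpow_const (x := s) (p := -θ) (Or.inl hsne)
  have hbs : HasDerivAt (fun z : ℝ => z ^ (-θ) * z) ((-θ * s ^ (-θ-1)) * s + s ^ (-θ)) s := by
    simpa using hb'.fun_mul (hasDerivAt_id s)
  have hJ1 : HasDerivAt (fun z : ℝ => J (z ^ (-θ) * z))
      (J' (s ^ (-θ) * s) * ((-θ * s ^ (-θ-1)) * s + s ^ (-θ))) s := by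
    have h' : HasDerivAt (J ∘ (fun z : ℝ => z ^ (-θ) * z))
        (J' (s ^ (-θ) * s) * ((-θ * s ^ (-θ-1)) * s + s ^ (-θ))) s :=
      HasDerivAt.comp s (hJderiv (s ^ (-θ) * s)) hbs
    exact h'
  have h4 : HasDerivAt (fun z : ℝ => z ^ (-θ) * J (z ^ (-θ) * z))
      ((-θ * s ^ (-θ-1)) * J (s ^ (-θ) * s)
        + s ^ (-θ) * (J' (s ^ (-θ) * s) * ((-θ * s ^ (-θ-1)) * s + s ^ (-θ)))) s :=
    hb'.mul hJ1
  have hσz : HasDerivAt (fun z : ℝ => σ * z) σ s := by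
    simpa using (hasDerivAt_id s).const_mul σ
  have h5 : HasDerivAt (fun z : ℝ => σ * J (σ * z)) (σ * (J' (σ * s) * σ)) s := by
    have h' : HasDerivAt (J ∘ (fun z : ℝ => σ * z)) (J' (σ * s) * σ) s :=
      HasDerivAt.comp s (hJderiv (σ * s)) hσz
    have := h'.const_mul σ
    simpa [Function.comp] using this
  have hψ := h4.sub h5
  -- the moving-cutoff integral agrees with the reparametrized function near s
  have hcontb : ContinuousAt (fun z : ℝ => z ^ (-θ)) s :=
    Real.continuousAt_rpow_const s (-θ) (Or.inl hsne)
  have hballae : Metric.ball (0:E3) σ =ᵐ[volume] Metric.closedBall (0:E3) σ := by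
    rw [MeasureTheory.ae_eq_set]
    constructor
    · rw [Set.diff_eq_empty.2 Metric.ball_subset_closedBall]; exact measure_empty
    · apply measure_mono_null _ (Measure.addHaar_sphere volume 0 σ)
      intro x hx
      obtain ⟨h1, h2⟩ := hx
      rw [Metric.mem_closedBall] at h1
      simp only [Set.mem_setOf_eq, Metric.mem_ball, not_lt] at h2
      rw [Metric.mem_sphere]
      exact le_antisymm h1 h2
  have hev : (fun s' : ℝ => ∫ k in annulus σ (s' ^ (-θ)),
        (Sig v k) l * Real.cos (⟪k, u⟫ * s' - ‖k‖ * s'))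
      =ᶠ[𝓝 s] (fun z : ℝ => z ^ (-θ) * J (z ^ (-θ) * z) - σ * J (σ * z)) := by
    filter_upwards [eventually_gt_nhds hs0, hcontb.eventually (eventually_gt_nhds hσs)]
      with z hz0 hzσ
    have hbz : 0 < z ^ (-θ:ℝ) := Real.rpow_pos_of_pos hz0 _
    simp only [← sub_mul]
    have hsplit : annulus σ (z ^ (-θ))
        = Metric.closedBall (0:E3) (z ^ (-θ)) \ Metric.ball (0:E3) σ := by
      ext k
      simp only [annulus, Set.mem_setOf_eq, Set.mem_diff, Metric.mem_closedBall,
        Metric.mem_ball, dist_zero_right, not_lt]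
      tauto
    rw [hsplit,
      integral_diff Metric.isOpen_ball.measurableSet (hIntOn _ hbz z)
        (Metric.ball_subset_closedBall.trans (Metric.closedBall_subset_closedBall hzσ.le)),
      setIntegral_congr_set hballae, hscale _ hbz z, hscale σ hσ z]
  refine ⟨_, hψ.congr_of_eventuallyEq hev, ?_⟩
  -- now the quantitative bound
  have hSpos : (0:ℝ) < s ^ (-(1+θ)) := Real.rpow_pos_of_pos hs0 _
  have hPe : s ^ (-θ-1:ℝ) = s ^ (-(1+θ)) := by
    congr 1
    ring
  have hbb : s ^ (-θ:ℝ) * s⁻¹ = s ^ (-(1+θ)) := by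
    rw [show s⁻¹ = s ^ (-1:ℝ) by rw [Real.rpow_neg_one], ← Real.rpow_add hs0]
    congr 1
    ring
  have hPs : s ^ (-θ-1:ℝ) * s = s ^ (-θ:ℝ) := by
    nth_rewrite 2 [show s = s ^ (1:ℝ) by rw [Real.rpow_one]]
    rw [← Real.rpow_add hs0]
    congr 1
    ring
  have hPpos : 0 < s ^ (-θ-1:ℝ) := Real.rpow_pos_of_pos hs0 _
  have ht1 : 0 < s ^ (-θ:ℝ) * s := mul_pos hbpos hs0
  -- term 1
  have hT1 : |(-θ * s ^ (-θ-1)) * J (s ^ (-θ) * s)| ≤ (M*C₁) * s ^ (-(1+θ)) := by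
    rw [abs_mul, abs_mul, abs_neg, abs_of_pos hθ0, abs_of_pos hPpos]
    calc θ * s ^ (-θ-1:ℝ) * |J (s ^ (-θ) * s)| ≤ 1 * s ^ (-θ-1:ℝ) * (M*C₁) := by
          apply mul_le_mul _ (hJbound _) (abs_nonneg _) (by positivity)
          apply mul_le_mul_of_nonneg_right (le_of_lt hθ1) (le_of_lt hPpos)
    _ = (M*C₁) * s ^ (-(1+θ)) := by rw [one_mul, hPe]; ring
  -- term 2
  have h2a : |(-θ * s ^ (-θ-1)) * s + s ^ (-θ)| ≤ 2 * s ^ (-θ:ℝ) := by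
    calc |(-θ * s ^ (-θ-1)) * s + s ^ (-θ)|
        ≤ |(-θ * s ^ (-θ-1)) * s| + |s ^ (-θ:ℝ)| := abs_add_le _ _
    _ = θ * (s ^ (-θ-1:ℝ) * s) + s ^ (-θ:ℝ) := by
        rw [abs_mul, abs_mul, abs_neg, abs_of_pos hθ0, abs_of_pos hPpos, abs_of_pos hs0,
          abs_of_pos hbpos]
        ring
    _ = θ * s ^ (-θ:ℝ) + s ^ (-θ:ℝ) := by rw [hPs]
    _ ≤ 2 * s ^ (-θ:ℝ) := by
        have h := mul_le_mul_of_nonneg_right (le_of_lt hθ1) (le_of_lt hbpos)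
        linarith
  have hT2 : |s ^ (-θ) * (J' (s ^ (-θ) * s) * ((-θ * s ^ (-θ-1)) * s + s ^ (-θ)))|
      ≤ (2*K) * s ^ (-(1+θ)) := by
    rw [abs_mul, abs_of_pos hbpos, abs_mul]
    calc s ^ (-θ:ℝ) * (|J' (s ^ (-θ) * s)| * |(-θ * s ^ (-θ-1)) * s + s ^ (-θ)|)
        ≤ s ^ (-θ:ℝ) * ((K/(s ^ (-θ) * s)) * (2 * s ^ (-θ:ℝ))) := by
          apply mul_le_mul_of_nonneg_left _ (le_of_lt hbpos)
          exact mul_le_mul (hJ'decay _ ht1) h2a (abs_nonneg _) (div_nonneg hK (le_of_lt ht1))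
    _ = (2*K) * (s ^ (-θ:ℝ) * s⁻¹) := by
        field_simp
    _ = (2*K) * s ^ (-(1+θ)) := by rw [hbb]
  -- term 3
  have hT3 : |σ * (J' (σ * s) * σ)| ≤ (K₂ + K) * s ^ (-(1+θ)) := by
    have habs : |σ * (J' (σ * s) * σ)| = σ^2 * |J' (σ * s)| := by
      rw [abs_mul, abs_mul, abs_of_pos hσ]
      ring
    rw [habs]
    by_cases hcase : σ * s ≤ 1
    · have hσinv : σ ≤ s⁻¹ := by
        rw [← one_div, le_div_iff₀ hs0]
        exact hcase
      calc σ^2 * |J' (σ * s)| ≤ (s⁻¹ * s ^ (-θ:ℝ)) * K₂ := by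
            apply mul_le_mul _ (hJ'bound _) (abs_nonneg _) (by positivity)
            calc σ^2 = σ * σ := sq σ
            _ ≤ s⁻¹ * s ^ (-θ:ℝ) :=
              mul_le_mul hσinv (le_of_lt hσs) (le_of_lt hσ) (by positivity)
      _ = K₂ * (s ^ (-θ:ℝ) * s⁻¹) := by ring
      _ = K₂ * s ^ (-(1+θ)) := by rw [hbb]
      _ ≤ (K₂ + K) * s ^ (-(1+θ)) :=
        mul_le_mul_of_nonneg_right (by linarith) (le_of_lt hSpos)
    · push_neg at hcase
      have h1 : σ^2 * |J' (σ * s)| ≤ σ^2 * (K/(σ*s)) := by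
        apply mul_le_mul_of_nonneg_left (hJ'decay _ (by positivity)) (by positivity)
      have h2 : σ^2 * (K/(σ*s)) = K * (σ * s⁻¹) := by
        field_simp
      have h3 : K * (σ * s⁻¹) ≤ K * (s ^ (-θ:ℝ) * s⁻¹) := by
        apply mul_le_mul_of_nonneg_left _ hK
        apply mul_le_mul_of_nonneg_right (le_of_lt hσs) (by positivity)
      calc σ^2 * |J' (σ * s)| ≤ K * (σ * s⁻¹) := by rw [← h2]; exact h1
      _ ≤ K * (s ^ (-θ:ℝ) * s⁻¹) := h3
      _ = K * s ^ (-(1+θ)) := by rw [hbb]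
      _ ≤ (K₂ + K) * s ^ (-(1+θ)) :=
        mul_le_mul_of_nonneg_right (by linarith) (le_of_lt hSpos)
  -- combine
  calc |(-θ * s ^ (-θ-1)) * J (s ^ (-θ) * s)
        + s ^ (-θ) * (J' (s ^ (-θ) * s) * ((-θ * s ^ (-θ-1)) * s + s ^ (-θ)))
        - σ * (J' (σ * s) * σ)|
      ≤ |(-θ * s ^ (-θ-1)) * J (s ^ (-θ) * s)
          + s ^ (-θ) * (J' (s ^ (-θ) * s) * ((-θ * s ^ (-θ-1)) * s + s ^ (-θ)))|
        + |σ * (J' (σ * s) * σ)| := abs_sub _ _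
  _ ≤ (|(-θ * s ^ (-θ-1)) * J (s ^ (-θ) * s)|
        + |s ^ (-θ) * (J' (s ^ (-θ) * s) * ((-θ * s ^ (-θ-1)) * s + s ^ (-θ)))|)
        + |σ * (J' (σ * s) * σ)| := by
      gcongr
      exact abs_add_le _ _
  _ ≤ ((M*C₁) * s ^ (-(1+θ)) + (2*K) * s ^ (-(1+θ))) + (K₂ + K) * s ^ (-(1+θ)) :=
      add_le_add (add_le_add hT1 hT2) hT3
  _ = (M*C₁ + 2*K + (K₂ + K)) * s ^ (-(1+θ)) := by ring
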